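/- Let q be a prime power with q ≡ 1 (mod 3), α ∈ GF(q³)\GF(q) with α³ ∈ GF(q), ω = α^{q−1}, t a positive integer with t ≢ 1 (mod 3), and a, b, c, u ∈ GF(q). Then F₁(x) = ax + bx^q + cx^{q²} + (x + ωx^q + ω²x^{q²} + uα²)^t is a permutation of GF(q³) if and only if (a+b+c)(a + bω + cω²)(a + bω² + cω) ≠ 0. -/

import Mathlib

theorem stmt_19 {F E : Type*} [Field F] [Fintype F] [Field E] [Fintype E] [Algebra F E]
    (hq : Fintype.card F % 3 = 1) (hdim : Module.finrank F E = 3)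
    (α : E) (hα : α ∉ Set.range (algebraMap F E))
    (hα3 : α ^ 3 ∈ Set.range (algebraMap F E))
    (ω : F) (hω : algebraMap F E ω = α ^ (Fintype.card F - 1))
    (hω3 : ω ^ 3 = 1) (hω1 : ω ≠ 1)
    (t : ℕ) (ht : 0 < t) (htm : t % 3 ≠ 1) (a b c u : F) :
    Function.Bijective (fun x : E =>
      algebraMap F E a * x + algebraMap F E b * x ^ Fintype.card F +
        algebraMap F E c * x ^ Fintype.card F ^ 2 +
        (x + algebraMap F E ω * x ^ Fintype.card F +
          algebraMap F E (ω ^ 2) * x ^ Fintype.card F ^ 2 +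
          algebraMap F E u * α ^ 2) ^ t)
      ↔ (a + b + c) * (a + b * ω + c * ω ^ 2) * (a + b * ω ^ 2 + c * ω) ≠ 0 := by
  classical
  have hA : Function.Injective (algebraMap F E) := (algebraMap F E).injective
  set q := Fintype.card F with hqdef
  set A := algebraMap F E with hAdef
  -- characteristic facts
  haveI : CharP F (ringChar F) := ringChar.charP F
  have hpprime : (ringChar F).Prime := CharP.char_is_prime F (ringChar F)
  haveI : Fact (ringChar F).Prime := ⟨hpprime⟩
  haveI : CharP E (ringChar F) := charP_of_injective_algebraMap hA (ringChar F)
  obtain ⟨n, -, hcard⟩ := FiniteField.card F (ringChar F)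
  have hq0 : q ≠ 0 := Fintype.card_pos.ne'
  have h3F : (3 : F) ≠ 0 := by
    intro h
    have h3 : ringChar F ∣ 3 := by
      exact_mod_cast (CharP.cast_eq_zero_iff F (ringChar F) 3).mp (by exact_mod_cast h)
    have hp3 : ringChar F = 3 :=
      (Nat.prime_dvd_prime_iff_eq hpprime (by norm_num)).mp h3
    have hdvd : (3 : ℕ) ∣ q := by
      rw [hqdef, hcard, hp3]; exact dvd_pow_self 3 n.pos.ne'
    omega
  have h3E : (3 : E) ≠ 0 := fun h => h3F (hA (show A 3 = A 0 by rw [map_ofNat, map_zero]; exact h))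
  have hfq : ∀ x y : E, (x + y) ^ q = x ^ q + y ^ q := by
    intro x y; rw [hqdef, hcard]; exact add_pow_char_pow x y (ringChar F) ↑n
  have hAq : ∀ x : F, (A x) ^ q = A x := fun x => by
    rw [← map_pow, FiniteField.pow_card]
  have hα0 : α ≠ 0 := fun h => hα ⟨0, by simp [h]⟩
  have hαq : α ^ q = A ω * α := by
    rw [hω]
    conv_lhs => rw [show q = (q - 1) + 1 by omega]
    rw [pow_succ]
  have hw3E : (A ω) ^ 3 = 1 := by rw [← map_pow, hω3, map_one]
  have hsum : 1 + ω + ω ^ 2 = 0 := by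
    rcases mul_eq_zero.mp (show (ω - 1) * (1 + ω + ω ^ 2) = 0 by linear_combination hω3) with h | h
    · exact absurd (sub_eq_zero.mp h) hω1
    · exact h
  have hwsE : (1 : E) + A ω + (A ω) ^ 2 = 0 := by
    have := congrArg A hsum
    simpa [map_add, map_pow] using this
  have hw1E : A ω ≠ 1 := fun h => hω1 (hA (h.trans (map_one A).symm))
  have hw0 : A ω ≠ 0 := fun h => one_ne_zero (α := E) (by rw [← hw3E, h]; ring)
  -- Frobenius on coordinates
  have hxq : ∀ x₁ x₂ x₃ : F, (A x₁ + A x₂ * α + A x₃ * α ^ 2) ^ q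
      = A x₁ + A ω * A x₂ * α + (A ω) ^ 2 * A x₃ * α ^ 2 := by
    intro x₁ x₂ x₃
    rw [hfq, hfq, mul_pow, mul_pow, hAq, hAq, hAq, hαq, ← pow_mul,
      show 2 * q = q * 2 by ring, pow_mul, hαq, mul_pow]
    ring
  have hxq2 : ∀ x₁ x₂ x₃ : F, (A x₁ + A x₂ * α + A x₃ * α ^ 2) ^ q ^ 2
      = A x₁ + (A ω) ^ 2 * A x₂ * α + A ω * A x₃ * α ^ 2 := by
    intro x₁ x₂ x₃
    rw [show q ^ 2 = q * q from sq q, pow_mul, hxq]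
    have e : A x₁ + A ω * A x₂ * α + (A ω) ^ 2 * A x₃ * α ^ 2
        = A x₁ + A (ω * x₂) * α + A (ω ^ 2 * x₃) * α ^ 2 := by
      simp only [map_mul, map_pow]
    rw [e, hxq]
    simp only [map_mul, map_pow]
    linear_combination A x₃ * α ^ 2 * A ω * hw3E
  -- kernel triviality
  have hker : ∀ x₁ x₂ x₃ : F, A x₁ + A x₂ * α + A x₃ * α ^ 2 = 0 →
      x₁ = 0 ∧ x₂ = 0 ∧ x₃ = 0 := by
    intro x₁ x₂ x₃ h0
    have h1 : A x₁ + A ω * A x₂ * α + (A ω) ^ 2 * A x₃ * α ^ 2 = 0 := by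
      rw [← hxq x₁ x₂ x₃, h0, zero_pow hq0]
    have h2 : A x₁ + (A ω) ^ 2 * A x₂ * α + A ω * A x₃ * α ^ 2 = 0 := by
      rw [← hxq2 x₁ x₂ x₃, h0, zero_pow (pow_ne_zero 2 hq0)]
    have e1 : A x₁ * 3 = 0 := by
      linear_combination h0 + h1 + h2 - A x₂ * α * hwsE - A x₃ * α ^ 2 * hwsE
    have hx1 : x₁ = 0 := by
      have := (mul_eq_zero.mp e1).resolve_right h3E
      exact hA (by simpa using this)
    subst hx1
    simp only [map_zero, zero_add] at h0 h1
    have e2 : A x₃ * (A ω * (A ω - 1) * α ^ 2) = 0 := by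
      linear_combination h1 - A ω * h0
    have hx3 : x₃ = 0 := by
      have hne : A ω * (A ω - 1) * α ^ 2 ≠ 0 :=
        mul_ne_zero (mul_ne_zero hw0 (sub_ne_zero.mpr hw1E)) (pow_ne_zero _ hα0)
      have := (mul_eq_zero.mp e2).resolve_right hne
      exact hA (by simpa using this)
    subst hx3
    simp only [map_zero, zero_mul, add_zero] at h0
    have hx2 : x₂ = 0 := by
      have := (mul_eq_zero.mp h0).resolve_right hα0
      exact hA (by simpa using this)
    exact ⟨rfl, hx2, rfl⟩
  -- the coordinate map ψ
  set ψ : F × F × F → E := fun v => A v.1 + A v.2.1 * α + A v.2.2 * α ^ 2 with hψdef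
  have hψinj : Function.Injective ψ := by
    intro v v' h
    have h0 : A (v.1 - v'.1) + A (v.2.1 - v'.2.1) * α + A (v.2.2 - v'.2.2) * α ^ 2 = 0 := by
      simp only [map_sub]
      simp only [hψdef] at h
      linear_combination h
    obtain ⟨h1, h2, h3⟩ := hker _ _ _ h0
    exact Prod.ext (sub_eq_zero.mp h1) (Prod.ext (sub_eq_zero.mp h2) (sub_eq_zero.mp h3))
  have hcardE : Fintype.card E = q ^ 3 := by
    rw [← hdim]; exact Module.card_eq_pow_finrank
  have hψbij : Function.Bijective ψ := by
    rw [Fintype.bijective_iff_injective_and_card]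
    refine ⟨hψinj, ?_⟩
    simp only [Fintype.card_prod, hcardE, ← hqdef]
    ring
  -- the power-term structure
  obtain ⟨s, hs⟩ := hα3
  set r := 2 * t % 3 with hrdef
  set k := 2 * t / 3 with hkdef
  have hr01 : r = 0 ∨ r = 1 := by omega
  have hα2t : α ^ (2 * t) = A (s ^ k) * α ^ r := by
    rw [map_pow, hs, ← pow_mul, ← pow_add, show 3 * k + r = 2 * t by omega]
  set d : F → F := fun z => (3 * z + u) ^ t * s ^ k with hddef
  set e₀ : F := if r = 0 then 1 else 0 with he₀
  set e₁ : F := if r = 1 then 1 else 0 with he₁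
  set l₁ := a + b + c with hl₁
  set l₂ := a + b * ω + c * ω ^ 2 with hl₂
  set l₃ := a + b * ω ^ 2 + c * ω with hl₃
  set G : F × F × F → F × F × F :=
    fun v => (l₁ * v.1 + e₀ * d v.2.2, l₂ * v.2.1 + e₁ * d v.2.2, l₃ * v.2.2) with hGdef
  -- the inner linearized term
  have hL : ∀ x₁ x₂ x₃ : F,
      (A x₁ + A x₂ * α + A x₃ * α ^ 2)
        + A ω * (A x₁ + A x₂ * α + A x₃ * α ^ 2) ^ q
        + A (ω ^ 2) * (A x₁ + A x₂ * α + A x₃ * α ^ 2) ^ q ^ 2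
        + A u * α ^ 2 = A (3 * x₃ + u) * α ^ 2 := by
    intro x₁ x₂ x₃
    rw [hxq, hxq2]
    simp only [map_add, map_mul, map_pow, map_ofNat]
    linear_combination A x₁ * hwsE + A x₂ * α * hwsE + A x₂ * α * A ω * hw3E
      + 2 * A x₃ * α ^ 2 * hw3E
  -- commuting square
  have hcomm : ∀ x₁ x₂ x₃ : F,
      A a * (A x₁ + A x₂ * α + A x₃ * α ^ 2)
        + A b * (A x₁ + A x₂ * α + A x₃ * α ^ 2) ^ q
        + A c * (A x₁ + A x₂ * α + A x₃ * α ^ 2) ^ q ^ 2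
        + ((A x₁ + A x₂ * α + A x₃ * α ^ 2)
            + A ω * (A x₁ + A x₂ * α + A x₃ * α ^ 2) ^ q
            + A (ω ^ 2) * (A x₁ + A x₂ * α + A x₃ * α ^ 2) ^ q ^ 2
            + A u * α ^ 2) ^ t
      = A (l₁ * x₁ + e₀ * d x₃) + A (l₂ * x₂ + e₁ * d x₃) * α + A (l₃ * x₃) * α ^ 2 := by
    intro x₁ x₂ x₃
    rw [hL, hxq, hxq2, mul_pow, ← map_pow, ← pow_mul, hα2t]
    rcases hr01 with h | h
    · rw [h]
      simp only [pow_zero, mul_one, he₀, he₁, h, hddef, hl₁, hl₂, hl₃, if_pos, if_neg,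
        reduceIte, map_add, map_mul, map_pow, map_ofNat, map_one, map_zero, one_ne_zero]
      simp only [show (0 : ℕ) ≠ 1 by norm_num, if_true, if_false, map_one, map_zero]
      ring
    · rw [h]
      simp only [pow_one, he₀, he₁, h, hddef, hl₁, hl₂, hl₃, map_add, map_mul, map_pow,
        map_ofNat, map_one, map_zero]
      simp only [show (1 : ℕ) ≠ 0 by norm_num, if_true, if_false, reduceIte, map_one, map_zero]
      ring
  have hcomp : (fun x : E => A a * x + A b * x ^ q + A c * x ^ q ^ 2 +
      (x + A ω * x ^ q + A (ω ^ 2) * x ^ q ^ 2 + A u * α ^ 2) ^ t) ∘ ψ = ψ ∘ G := by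
    funext v
    obtain ⟨x₁, x₂, x₃⟩ := v
    exact hcomm x₁ x₂ x₃
  have key : Function.Bijective (fun x : E => A a * x + A b * x ^ q + A c * x ^ q ^ 2 +
      (x + A ω * x ^ q + A (ω ^ 2) * x ^ q ^ 2 + A u * α ^ 2) ^ t)
      ↔ Function.Bijective G := by
    rw [← Function.Bijective.of_comp_iff _ hψbij, hcomp,
      Function.Bijective.of_comp_iff' hψbij]
  rw [key]
  constructor
  · intro hbij hprod
    rcases mul_eq_zero.mp hprod with h12 | h3
    · rcases mul_eq_zero.mp h12 with h1 | h2
      · have heq : G (1, 0, 0) = G (0, 0, 0) := by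
          simp only [hGdef, h1]
          norm_num
        exact one_ne_zero ((Prod.ext_iff.mp (hbij.injective heq)).1)
      · have heq : G (0, 1, 0) = G (0, 0, 0) := by
          simp only [hGdef, h2]
          norm_num
        exact one_ne_zero ((Prod.ext_iff.mp (Prod.ext_iff.mp (hbij.injective heq)).2).1)
    · obtain ⟨v, hv⟩ := hbij.surjective (0, 0, 1)
      have h1 : l₃ * v.2.2 = 1 := (Prod.ext_iff.mp (Prod.ext_iff.mp hv).2).2
      rw [h3, zero_mul] at h1
      exact zero_ne_one h1
  · intro hprod
    have h1 : l₁ ≠ 0 := fun h => hprod (by rw [h]; ring)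
    have h2 : l₂ ≠ 0 := fun h => hprod (by rw [h]; ring)
    have h3 : l₃ ≠ 0 := fun h => hprod (by rw [h]; ring)
    refine Function.bijective_iff_has_inverse.mpr
      ⟨fun v => ((v.1 - e₀ * d (v.2.2 / l₃)) / l₁, (v.2.1 - e₁ * d (v.2.2 / l₃)) / l₂,
        v.2.2 / l₃), ?_, ?_⟩
    · intro v
      obtain ⟨x₁, x₂, x₃⟩ := v
      simp only [hGdef]
      have hx : l₃ * x₃ / l₃ = x₃ := by field_simp
      rw [hx]
      refine Prod.ext ?_ (Prod.ext ?_ ?_) <;> field_simp <;> ring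
    · intro v
      obtain ⟨y₁, y₂, y₃⟩ := v
      simp only [hGdef]
      refine Prod.ext ?_ (Prod.ext ?_ ?_) <;> field_simp <;> ring
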